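/- Let φ(z) = max(1 − z, 0) (hinge loss). For the hybrid model with parameters (w, θ₊, θ₋), θ₋ ≤ θ₊, and a single sample (x, y, y_b) with y, y_b ∈ {−1,1}: if the hybrid model misclassifies x (f(x) ≠ y), then the corresponding loss term in the paper's loss — φ(y(⟨w,x⟩ − θ₋)) when y_b = 1 and φ(y(⟨w,x⟩ − θ₊)) when y_b = −1 — is at least 1. That is, the loss function upper-bounds the 0–1 error of the hybrid model. -/
import Mathlib


/-- The hybrid linear model with black-box prediction yb on the given point:
predict 1 if ⟨w,x⟩ ≥ θ₊, predict −1 if ⟨w,x⟩ ≤ θ₋, else predict yb. -/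
noncomputable def hybridLinear {d : ℕ} (w : Fin d → ℝ) (θp θm : ℝ)
    (fb : (Fin d → ℝ) → ℝ) (x : Fin d → ℝ) : ℝ :=
  if θp ≤ ∑ i, w i * x i then 1
  else if ∑ i, w i * x i ≤ θm then -1
  else fb x

/-- the hinge surrogate loss upper-bounds the 0–1 error of the
hybrid model: if the hybrid model misclassifies (x, y), the loss term
(φ(y(⟨w,x⟩ − θ₋)) when y_b = 1, φ(y(⟨w,x⟩ − θ₊)) when y_b = −1) is ≥ 1,
where φ(z) = max(1 − z, 0). -/
theorem stmt_15 {d : ℕ} (w : Fin d → ℝ) (θp θm : ℝ) (hθ : θm ≤ θp)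
    (x : Fin d → ℝ) (y yb : ℝ)
    (hy : y = 1 ∨ y = -1) (hyb : yb = 1 ∨ yb = -1)
    (hmis : hybridLinear w θp θm (fun _ => yb) x ≠ y) :
    1 ≤ if yb = 1 then max (1 - y * ((∑ i, w i * x i) - θm)) 0
        else max (1 - y * ((∑ i, w i * x i) - θp)) 0 := by
  unfold hybridLinear at hmis
  set s := ∑ i, w i * x i with hs
  split_ifs at hmis ⊢ with h1 h2 h3 <;>
    rcases hy with rfl | rfl <;>
    first
    | exact absurd rfl hmis
    | · refine le_trans ?_ (le_max_left _ _)
        rcases hyb with rfl | rfl <;> simp_all <;> nlinarith
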